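/- arXiv:1709.00817 — 4 statements merged into one kernel-verified Lean document; each statement's English description precedes it below -/
import Mathlib

section
/- Let G and G' be Gauss diagrams such that G' is obtained from G by a crossing change at a chord c. Then exactly one of the following holds: (1) there exist a nonzero integer m and ε ∈ {+1,−1} such that W_G(t) − W_{G'}(t) = ε(t^m + t^{−m}) (namely m = Ind_G(c) and ε = w(c) when Ind_G(c) ≠ 0), or (2) W_G(t) = W_{G'}(t) (which occurs when Ind_G(c) = 0). -/
open scoped Classical

/-- A Gauss diagram with `n` chords: the `2n` marked points live on the cyclic group
`ZMod (2*n)` (the oriented circle); each chord `i` is the ordered pair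
`(tail i, head i)` of marked points and carries a sign (writhe) `sign i ∈ {+1, -1}`;
all `2n` endpoints are distinct. -/
structure GaussDiagram (n : ℕ) where
  tail : Fin n → ZMod (2 * n)
  head : Fin n → ZMod (2 * n)
  sign : Fin n → ℤ
  sign_mem : ∀ i, sign i = 1 ∨ sign i = -1
  endpoints_inj : Function.Injective
    (fun p : Fin n × Bool => if p.2 then head p.1 else tail p.1)

namespace GaussDiagram

variable {n : ℕ}

/-- `x` lies on the open arc running in the circle's orientation from `a` to `b`. -/
def arcMem (a b x : ZMod (2 * n)) : Prop :=
  0 < (x - a).val ∧ (x - a).val < (b - a).val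

/-- `x` lies on the open oriented arc from the tail to the head of chord `i`. -/
def inArc (G : GaussDiagram n) (i : Fin n) (x : ZMod (2 * n)) : Prop :=
  arcMem (G.tail i) (G.head i) x

/-- Chords `i` and `j` are linked: exactly one endpoint of `j` lies on the open
oriented arc from the tail to the head of `i`. -/
def linked (G : GaussDiagram n) (i j : Fin n) : Prop :=
  Xor' (G.inArc i (G.tail j)) (G.inArc i (G.head j))

/-- Chord `j` crosses chord `i` from right to left. -/
def crossesRL (G : GaussDiagram n) (i j : Fin n) : Prop :=
  G.linked i j ∧ G.inArc i (G.head j)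

/-- Chord `j` crosses chord `i` from left to right. -/
def crossesLR (G : GaussDiagram n) (i j : Fin n) : Prop :=
  G.linked i j ∧ G.inArc i (G.tail j)

/-- The index of the chord `i`: `Ind(i) = r₊ − r₋ − l₊ + l₋`. -/
noncomputable def ind (G : GaussDiagram n) (i : Fin n) : ℤ :=
  ((Finset.univ.filter fun j => G.crossesRL i j ∧ G.sign j = 1).card : ℤ)
    - ((Finset.univ.filter fun j => G.crossesRL i j ∧ G.sign j = -1).card : ℤ)
    - ((Finset.univ.filter fun j => G.crossesLR i j ∧ G.sign j = 1).card : ℤ)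
    + ((Finset.univ.filter fun j => G.crossesLR i j ∧ G.sign j = -1).card : ℤ)

/-- The `k`-th writhe `J_k(G)`: the number of positive chords of index `k` minus the
number of negative chords of index `k`. -/
noncomputable def J (G : GaussDiagram n) (k : ℤ) : ℤ :=
  ((Finset.univ.filter fun i => G.ind i = k ∧ G.sign i = 1).card : ℤ)
    - ((Finset.univ.filter fun i => G.ind i = k ∧ G.sign i = -1).card : ℤ)

/-- The writhe polynomial `W_G(t) = ∑_{Ind(c) ≠ 0} w(c) t^{Ind(c)} = ∑_{k ≠ 0} J_k(G) t^k`. -/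
noncomputable def writhePoly (G : GaussDiagram n) : LaurentPolynomial ℤ :=
  ∑ i ∈ Finset.univ.filter (fun i => G.ind i ≠ 0),
    LaurentPolynomial.C (G.sign i) * LaurentPolynomial.T (G.ind i)

/-- The odd writhe `J(G) = ∑_{c ∈ Odd(G)} w(c)`. -/
noncomputable def oddWrithe (G : GaussDiagram n) : ℤ :=
  ∑ i ∈ Finset.univ.filter (fun i => Odd (G.ind i)), G.sign i

/-- `G'` is obtained from `G` by a crossing change at the chord `c`: the tail and head
of `c` are interchanged and its sign is negated, all other chords being unchanged. -/
def IsCrossingChangeAt (G G' : GaussDiagram n) (c : Fin n) : Prop :=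
  G'.tail c = G.head c ∧ G'.head c = G.tail c ∧ G'.sign c = -G.sign c ∧
    ∀ j : Fin n, j ≠ c →
      G'.tail j = G.tail j ∧ G'.head j = G.head j ∧ G'.sign j = G.sign j

/-- `G'` is obtained from `G` by a crossing change (at some chord). -/
def IsCrossingChange (G G' : GaussDiagram n) : Prop :=
  ∃ c, IsCrossingChangeAt G G' c

/-- `G'` is obtained from `G` by a sequence of `m` crossing changes. -/
def ChangedBy (m : ℕ) (G G' : GaussDiagram n) : Prop :=
  ∃ f : ℕ → GaussDiagram n, f 0 = G ∧ f m = G' ∧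
    ∀ i < m, IsCrossingChange (f i) (f (i + 1))

end GaussDiagram

namespace GaussDiagram

variable {n : ℕ}

lemma sum_if_sign (G : GaussDiagram n) (P : Fin n → Prop) :
    ∑ j : Fin n, (if P j then G.sign j else 0)
      = ((Finset.univ.filter fun j => P j ∧ G.sign j = 1).card : ℤ)
        - ((Finset.univ.filter fun j => P j ∧ G.sign j = -1).card : ℤ) := by
  rw [Finset.card_filter, Finset.card_filter]
  push_cast
  rw [← Finset.sum_sub_distrib]
  refine Finset.sum_congr rfl fun j _ => ?_
  rcases G.sign_mem j with hs | hs <;> by_cases hp : P j <;> simp [hp, hs]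

lemma ind_eq_sum (G : GaussDiagram n) (i : Fin n) :
    G.ind i = ∑ j : Fin n,
      ((if G.crossesRL i j then G.sign j else 0)
        - (if G.crossesLR i j then G.sign j else 0)) := by
  rw [Finset.sum_sub_distrib, sum_if_sign, sum_if_sign, ind]
  ring

lemma not_inArc_tail (G : GaussDiagram n) (i : Fin n) : ¬ G.inArc i (G.tail i) := by
  simp [inArc, arcMem]

lemma not_inArc_head (G : GaussDiagram n) (i : Fin n) : ¬ G.inArc i (G.head i) := by
  simp [inArc, arcMem]

lemma not_linked_self (G : GaussDiagram n) (i : Fin n) : ¬ G.linked i i := by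
  rintro (⟨h1, _⟩ | ⟨h1, _⟩)
  · exact not_inArc_tail G i h1
  · exact not_inArc_head G i h1

lemma val_compl {N : ℕ} [NeZero N] {a b x : ZMod N} (hab : a ≠ b) (hxa : x ≠ a)
    (hxb : x ≠ b) :
    (0 < (x - b).val ∧ (x - b).val < (a - b).val)
      ↔ ¬ (0 < (x - a).val ∧ (x - a).val < (b - a).val) := by
  have hNpos : 0 < N := Nat.pos_of_ne_zero (NeZero.ne N)
  have hq : b - a ≠ 0 := sub_ne_zero.mpr (Ne.symm hab)
  have hp : x - a ≠ 0 := sub_ne_zero.mpr hxa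
  have hu0 : (x - a).val ≠ 0 := fun h => hp ((ZMod.val_eq_zero _).mp h)
  have hv0 : (b - a).val ≠ 0 := fun h => hq ((ZMod.val_eq_zero _).mp h)
  have huN : (x - a).val < N := ZMod.val_lt _
  have hvN : (b - a).val < N := ZMod.val_lt _
  have huv : (x - a).val ≠ (b - a).val := by
    intro hh
    have := ZMod.val_injective N hh
    exact hxb (by linear_combination this)
  set u := (x - a).val
  set v := (b - a).val
  have hxbeq : x - b = (x - a) + (-(b - a)) := by ring
  have hnegv : (-(b - a)).val = N - v := by rw [ZMod.neg_val]; simp [hq]; rfl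
  have hw : (x - b).val = (u + (N - v)) % N := by rw [hxbeq, ZMod.val_add, hnegv]
  have habeq : a - b = -(b - a) := by ring
  have hav : (a - b).val = N - v := by rw [habeq, hnegv]
  rw [hw, hav]
  rcases Nat.lt_or_ge u v with hlt | hge
  · have hm : (u + (N - v)) % N = u + (N - v) := Nat.mod_eq_of_lt (by omega)
    rw [hm]; constructor
    · intro ⟨_, h2⟩; omega
    · intro hcon; exact absurd ⟨by omega, hlt⟩ hcon
  · have hgt : v < u := by omega
    have hm : (u + (N - v)) % N = u - v := by
      have he : u + (N - v) = (u - v) + N := by omega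
      rw [he, Nat.add_mod_right, Nat.mod_eq_of_lt (by omega)]
    rw [hm]; constructor
    · intro _ hcon; omega
    · intro _; exact ⟨by omega, by omega⟩

lemma arcMem_compl (hn : n ≠ 0) {a b x : ZMod (2 * n)} (hab : a ≠ b) (hxa : x ≠ a)
    (hxb : x ≠ b) : arcMem b a x ↔ ¬ arcMem a b x := by
  haveI : NeZero (2 * n) := ⟨by omega⟩
  exact val_compl hab hxa hxb

lemma ep_ne (G : GaussDiagram n) {p q : Fin n × Bool} (hpq : p ≠ q) :
    (if p.2 then G.head p.1 else G.tail p.1) ≠ (if q.2 then G.head q.1 else G.tail q.1) :=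
  fun hh => hpq (G.endpoints_inj hh)

lemma tail_ne_head (G : GaussDiagram n) (i j : Fin n) : G.tail i ≠ G.head j := by
  have := ep_ne G (p := (i, false)) (q := (j, true)) (by simp)
  simpa using this

lemma tail_ne_tail (G : GaussDiagram n) {i j : Fin n} (hij : i ≠ j) :
    G.tail i ≠ G.tail j := by
  have := ep_ne G (p := (i, false)) (q := (j, false)) (by simp [hij])
  simpa using this

lemma head_ne_head (G : GaussDiagram n) {i j : Fin n} (hij : i ≠ j) :
    G.head i ≠ G.head j := by
  have := ep_ne G (p := (i, true)) (q := (j, true)) (by simp [hij])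
  simpa using this

section Change

variable {G G' : GaussDiagram n} {c : Fin n}

lemma hn_pos (h : G.IsCrossingChangeAt G' c) : n ≠ 0 := by
  intro hn; subst hn; exact c.elim0

lemma inArc_c_iff (h : G.IsCrossingChangeAt G' c) {x : ZMod (2 * n)}
    (hxt : x ≠ G.tail c) (hxh : x ≠ G.head c) :
    G'.inArc c x ↔ ¬ G.inArc c x := by
  rw [inArc, h.1, h.2.1]
  exact arcMem_compl (hn_pos h) (G.tail_ne_head c c) hxt hxh

end Change

end GaussDiagram
namespace GaussDiagram

variable {n : ℕ}

section Change2

variable {G G' : GaussDiagram n} {c : Fin n}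

lemma linked_c_iff (h : G.IsCrossingChangeAt G' c) {d : Fin n} (hd : d ≠ c) :
    G'.linked c d ↔ G.linked c d := by
  rw [linked, linked, (h.2.2.2 d hd).1, (h.2.2.2 d hd).2.1,
    inArc_c_iff h (G.tail_ne_tail hd) (G.tail_ne_head d c),
    inArc_c_iff h (Ne.symm (G.tail_ne_head c d)) (G.head_ne_head hd)]
  unfold Xor' Xor
  tauto

lemma crossesRL_c_iff (h : G.IsCrossingChangeAt G' c) {d : Fin n} (hd : d ≠ c) :
    G'.crossesRL c d ↔ G.crossesLR c d := by
  rw [crossesRL, crossesLR, (h.2.2.2 d hd).2.1, linked_c_iff h hd,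
    inArc_c_iff h (Ne.symm (G.tail_ne_head c d)) (G.head_ne_head hd)]
  unfold linked Xor' Xor
  tauto

lemma crossesLR_c_iff (h : G.IsCrossingChangeAt G' c) {d : Fin n} (hd : d ≠ c) :
    G'.crossesLR c d ↔ G.crossesRL c d := by
  rw [crossesLR, crossesRL, (h.2.2.2 d hd).1, linked_c_iff h hd,
    inArc_c_iff h (G.tail_ne_tail hd) (G.tail_ne_head d c)]
  unfold linked Xor' Xor
  tauto

lemma ind_c (h : G.IsCrossingChangeAt G' c) : G'.ind c = -G.ind c := by
  rw [ind_eq_sum, ind_eq_sum, ← Finset.sum_neg_distrib]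
  refine Finset.sum_congr rfl fun d _ => ?_
  by_cases hd : d = c
  · subst hd
    simp [crossesRL, crossesLR, not_linked_self]
  · rw [(h.2.2.2 d hd).2.2]
    simp only [crossesRL_c_iff h hd, crossesLR_c_iff h hd]
    split_ifs <;> ring

lemma linked_j_iff (h : G.IsCrossingChangeAt G' c) {j : Fin n} (hj : j ≠ c) (d : Fin n) :
    G'.linked j d ↔ G.linked j d := by
  have harc : ∀ x, G'.inArc j x ↔ G.inArc j x := by
    intro x
    rw [inArc, inArc, (h.2.2.2 j hj).1, (h.2.2.2 j hj).2.1]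
  by_cases hd : d = c
  · subst hd
    rw [linked, linked, h.1, h.2.1, harc, harc]
    unfold Xor' Xor
    tauto
  · rw [linked, linked, (h.2.2.2 d hd).1, (h.2.2.2 d hd).2.1, harc, harc]

lemma ind_ne_c (h : G.IsCrossingChangeAt G' c) {j : Fin n} (hj : j ≠ c) :
    G'.ind j = G.ind j := by
  have harc : ∀ x, G'.inArc j x ↔ G.inArc j x := by
    intro x
    rw [inArc, inArc, (h.2.2.2 j hj).1, (h.2.2.2 j hj).2.1]
  rw [ind_eq_sum, ind_eq_sum]
  refine Finset.sum_congr rfl fun d _ => ?_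
  by_cases hd : d = c
  · subst hd
    have hRL : G'.crossesRL j d ↔ G.crossesLR j d := by
      rw [crossesRL, crossesLR, h.2.1, harc, linked_j_iff h hj]
    have hLR : G'.crossesLR j d ↔ G.crossesRL j d := by
      rw [crossesLR, crossesRL, h.1, harc, linked_j_iff h hj]
    rw [h.2.2.1]
    simp only [hRL, hLR]
    split_ifs <;> ring
  · have hRL : G'.crossesRL j d ↔ G.crossesRL j d := by
      rw [crossesRL, crossesRL, (h.2.2.2 d hd).2.1, harc, linked_j_iff h hj]
    have hLR : G'.crossesLR j d ↔ G.crossesLR j d := by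
      rw [crossesLR, crossesLR, (h.2.2.2 d hd).1, harc, linked_j_iff h hj]
    rw [(h.2.2.2 d hd).2.2]
    simp only [hRL, hLR]

end Change2

lemma CT_ne_zero (m : ℤ) (hm : m ≠ 0) (ε : ℤ) (hε : ε = 1 ∨ ε = -1) :
    LaurentPolynomial.C ε * (LaurentPolynomial.T m + LaurentPolynomial.T (-m)) ≠ 0 := by
  intro h0
  rw [mul_add, ← LaurentPolynomial.single_eq_C_mul_T,
    ← LaurentPolynomial.single_eq_C_mul_T] at h0
  have hmm : -m ≠ m := by omega
  have h1 := Finsupp.ext_iff.mp (congrArg AddMonoidAlgebra.coeff h0) m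
  rw [AddMonoidAlgebra.coeff_add, AddMonoidAlgebra.coeff_single, AddMonoidAlgebra.coeff_single,
    AddMonoidAlgebra.coeff_zero,
    Finsupp.add_apply, Finsupp.single_eq_same, Finsupp.single_eq_of_ne' hmm,
    add_zero, Finsupp.coe_zero, Pi.zero_apply] at h1
  rcases hε with hε | hε <;> omega

end GaussDiagram

/-- if `G'` is obtained from `G` by a crossing change at a chord `c`, then
exactly one of the following holds: (1) `W_G(t) − W_{G'}(t) = ε (t^m + t^{−m})` for some
nonzero integer `m` and `ε ∈ {±1}` (namely `m = Ind(c)`, `ε = w(c)` when `Ind(c) ≠ 0`),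
or (2) `W_G(t) = W_{G'}(t)` (which occurs when `Ind(c) = 0`). -/
theorem writhePoly_crossingChange {n : ℕ} (G G' : GaussDiagram n) (c : Fin n)
    (h : G.IsCrossingChangeAt G' c) :
    Xor'
      (∃ m : ℤ, m ≠ 0 ∧ ∃ ε : ℤ, (ε = 1 ∨ ε = -1) ∧
        G.writhePoly - G'.writhePoly =
          LaurentPolynomial.C ε * (LaurentPolynomial.T m + LaurentPolynomial.T (-m)))
      (G.writhePoly = G'.writhePoly)
    ∧ (G.ind c ≠ 0 →
        G.writhePoly - G'.writhePoly =
          LaurentPolynomial.C (G.sign c) *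
            (LaurentPolynomial.T (G.ind c) + LaurentPolynomial.T (-G.ind c)))
    ∧ (G.ind c = 0 → G.writhePoly = G'.writhePoly) := by
  classical
  have hdiff : G.writhePoly - G'.writhePoly =
      (if G.ind c ≠ 0 then
          LaurentPolynomial.C (G.sign c) * LaurentPolynomial.T (G.ind c) else 0)
        - (if G'.ind c ≠ 0 then
          LaurentPolynomial.C (G'.sign c) * LaurentPolynomial.T (G'.ind c) else 0) := by
    rw [GaussDiagram.writhePoly, GaussDiagram.writhePoly, Finset.sum_filter,
      Finset.sum_filter, ← Finset.sum_sub_distrib]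
    rw [Finset.sum_eq_single c]
    · intro j _ hj
      rw [GaussDiagram.ind_ne_c h hj, (h.2.2.2 j hj).2.2, sub_self]
    · intro habs
      exact absurd (Finset.mem_univ c) habs
  by_cases h0 : G.ind c = 0
  · have h0' : G'.ind c = 0 := by rw [GaussDiagram.ind_c h, h0, neg_zero]
    have hW : G.writhePoly = G'.writhePoly := by
      have : G.writhePoly - G'.writhePoly = 0 := by
        rw [hdiff]; simp [h0, h0']
      linear_combination this
    refine ⟨Or.inr ⟨hW, ?_⟩, fun hc => absurd h0 hc, fun _ => hW⟩
    rintro ⟨m, hm, ε, hε, heq⟩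
    refine GaussDiagram.CT_ne_zero m hm ε hε ?_
    rw [← heq, hW, sub_self]
  · have h0' : G'.ind c ≠ 0 := by rw [GaussDiagram.ind_c h]; omega
    have hkey : G.writhePoly - G'.writhePoly =
        LaurentPolynomial.C (G.sign c) *
          (LaurentPolynomial.T (G.ind c) + LaurentPolynomial.T (-G.ind c)) := by
      rw [hdiff, if_pos h0, if_pos h0', GaussDiagram.ind_c h, h.2.2.1, map_neg, mul_add]
      ring
    have hne : G.writhePoly ≠ G'.writhePoly := by
      intro hW
      refine GaussDiagram.CT_ne_zero (G.ind c) h0 (G.sign c) (G.sign_mem c) ?_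
      rw [← hkey, hW, sub_self]
    exact ⟨Or.inl ⟨⟨G.ind c, h0, G.sign c, G.sign_mem c, hkey⟩, hne⟩,
      fun _ => hkey, fun hc => absurd hc h0⟩
end

section
/- Let G be a Gauss diagram that can be transformed by a finite sequence of crossing changes into a Gauss diagram G' whose writhe polynomial vanishes, W_{G'}(t) = 0. Then the writhe polynomial of G is reciprocal: J_k(G) = J_{−k}(G) for every nonzero integer k. -/
open scoped Classical

namespace GaussDiagramAux

lemma lp_sum_apply {ι : Type*} (s : Finset ι) (f : ι → LaurentPolynomial ℤ) (k : ℤ) :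
    (∑ i ∈ s, f i).coeff k = ∑ i ∈ s, (f i).coeff k := by
  classical
  induction s using Finset.induction_on with
  | empty => rfl
  | @insert _ _ h ih => rw [Finset.sum_insert h, Finset.sum_insert h, ← ih]; rfl

end GaussDiagramAux

namespace GaussDiagram

variable {n : ℕ}

lemma tail_inj (G : GaussDiagram n) {i j : Fin n} (h : G.tail i = G.tail j) : i = j := by
  have := G.endpoints_inj (a₁ := (i, false)) (a₂ := (j, false)) (by simpa using h)
  simpa using this

lemma head_inj (G : GaussDiagram n) {i j : Fin n} (h : G.head i = G.head j) : i = j := by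
  have := G.endpoints_inj (a₁ := (i, true)) (a₂ := (j, true)) (by simpa using h)
  simpa using this

lemma arcMem_swap (hn : 0 < n) {a b x : ZMod (2 * n)} (hab : a ≠ b) (hxa : x ≠ a)
    (hxb : x ≠ b) : arcMem b a x ↔ ¬ arcMem (n := n) a b x := by
  haveI : NeZero (2 * n) := ⟨by omega⟩
  have hu0 : (x - a).val ≠ 0 := by
    intro h0; rw [ZMod.val_eq_zero, sub_eq_zero] at h0; exact hxa h0
  have hv0 : (b - a).val ≠ 0 := by
    intro h0; rw [ZMod.val_eq_zero, sub_eq_zero] at h0; exact hab h0.symm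
  set u := (x - a).val with hu
  set v := (b - a).val with hv
  have huN : u < 2 * n := ZMod.val_lt _
  have hvN : v < 2 * n := ZMod.val_lt _
  have huv : u ≠ v := by
    intro h
    have h2 : x - a = b - a := ZMod.val_injective (2 * n) h
    exact hxb (sub_left_inj.mp h2)
  haveI : NeZero (b - a) := ⟨by rw [sub_ne_zero]; exact fun h => hab h.symm⟩
  have hab' : (a - b).val = 2 * n - v := by
    rw [show a - b = -(b - a) by ring, ZMod.val_neg_of_ne_zero]
  have hxb' : (x - b).val = (u + (2 * n - v)) % (2 * n) := by
    rw [show x - b = (x - a) + (a - b) by ring, ZMod.val_add, hab']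
  unfold arcMem
  rw [hxb', hab', ← hu, ← hv]
  rcases lt_or_gt_of_ne huv with hlt | hgt
  · rw [Nat.mod_eq_of_lt (by omega)]
    omega
  · have hm : (u + (2 * n - v)) % (2 * n) = u - v := by
      have h1 : u + (2 * n - v) - 2 * n = u - v := by omega
      rw [Nat.mod_eq_sub_mod (by omega), h1, Nat.mod_eq_of_lt (by omega)]
    rw [hm]
    omega

open Classical in
/-- The signed contribution of chord `k` to the index of chord `i`. -/
noncomputable def contrib (G : GaussDiagram n) (i k : Fin n) : ℤ :=
  (if G.crossesRL i k ∧ G.sign k = 1 then 1 else 0)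
    - (if G.crossesRL i k ∧ G.sign k = -1 then 1 else 0)
    - (if G.crossesLR i k ∧ G.sign k = 1 then 1 else 0)
    + (if G.crossesLR i k ∧ G.sign k = -1 then 1 else 0)

open Classical in
lemma ind_eq_sum_s4 (G : GaussDiagram n) (i : Fin n) :
    G.ind i = ∑ k, G.contrib i k := by
  unfold ind contrib
  simp only [Finset.card_filter]
  push_cast
  rw [← Finset.sum_sub_distrib, ← Finset.sum_sub_distrib, ← Finset.sum_add_distrib]

section CC

variable {G G' : GaussDiagram n} {c : Fin n}

lemma cc_inArc_ne (hcc : IsCrossingChangeAt G G' c) {j : Fin n} (hj : j ≠ c)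
    (x : ZMod (2 * n)) : G'.inArc j x ↔ G.inArc j x := by
  unfold inArc
  rw [(hcc.2.2.2 j hj).1, (hcc.2.2.2 j hj).2.1]

lemma cc_inArc_c (hcc : IsCrossingChangeAt G G' c) {x : ZMod (2 * n)}
    (hx1 : x ≠ G.tail c) (hx2 : x ≠ G.head c) :
    G'.inArc c x ↔ ¬ G.inArc c x := by
  unfold inArc
  rw [hcc.1, hcc.2.1]
  exact arcMem_swap c.pos (G.tail_ne_head c c) hx1 hx2

lemma cc_RL_c (hcc : IsCrossingChangeAt G G' c) {j : Fin n} (hj : j ≠ c) :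
    (G'.crossesRL c j ↔ G.crossesLR c j) ∧ (G'.crossesLR c j ↔ G.crossesRL c j) := by
  have htt : G.tail j ≠ G.tail c := fun h => hj (G.tail_inj h)
  have hth : G.tail j ≠ G.head c := G.tail_ne_head j c
  have hht : G.head j ≠ G.tail c := fun h => (G.tail_ne_head c j) h.symm
  have hhh : G.head j ≠ G.head c := fun h => hj (G.head_inj h)
  have e1 : G'.inArc c (G'.tail j) ↔ ¬ G.inArc c (G.tail j) := by
    rw [(hcc.2.2.2 j hj).1]; exact cc_inArc_c hcc htt hth
  have e2 : G'.inArc c (G'.head j) ↔ ¬ G.inArc c (G.head j) := by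
    rw [(hcc.2.2.2 j hj).2.1]; exact cc_inArc_c hcc hht hhh
  unfold crossesRL crossesLR linked Xor'
  rw [e1, e2]
  unfold Xor
  tauto

lemma cc_RL_jc (hcc : IsCrossingChangeAt G G' c) {j : Fin n} (hj : j ≠ c) :
    (G'.crossesRL j c ↔ G.crossesLR j c) ∧ (G'.crossesLR j c ↔ G.crossesRL j c) := by
  have e1 : ∀ x, G'.inArc j x ↔ G.inArc j x := cc_inArc_ne hcc hj
  unfold crossesRL crossesLR linked Xor'
  rw [hcc.1, hcc.2.1, e1, e1]
  unfold Xor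
  tauto

lemma cc_other (hcc : IsCrossingChangeAt G G' c) {j k : Fin n} (hj : j ≠ c) (hk : k ≠ c) :
    (G'.crossesRL j k ↔ G.crossesRL j k) ∧ (G'.crossesLR j k ↔ G.crossesLR j k) := by
  have e1 : ∀ x, G'.inArc j x ↔ G.inArc j x := cc_inArc_ne hcc hj
  unfold crossesRL crossesLR linked Xor'
  rw [(hcc.2.2.2 k hk).1, (hcc.2.2.2 k hk).2.1, e1, e1]
  tauto

lemma contrib_self (H : GaussDiagram n) (i : Fin n) : H.contrib i i = 0 := by
  have h := H.not_linked_self i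
  unfold contrib crossesRL crossesLR
  rw [if_neg (fun hx => h hx.1.1), if_neg (fun hx => h hx.1.1),
    if_neg (fun hx => h hx.1.1), if_neg (fun hx => h hx.1.1)]
  ring

lemma cc_contrib_other (hcc : IsCrossingChangeAt G G' c) {j k : Fin n}
    (hj : j ≠ c) (hk : k ≠ c) : G'.contrib j k = G.contrib j k := by
  unfold contrib
  rw [(cc_other hcc hj hk).1, (cc_other hcc hj hk).2, (hcc.2.2.2 k hk).2.2]

lemma cc_contrib_jc (hcc : IsCrossingChangeAt G G' c) {j : Fin n} (hj : j ≠ c) :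
    G'.contrib j c = G.contrib j c := by
  unfold contrib
  rw [(cc_RL_jc hcc hj).1, (cc_RL_jc hcc hj).2, hcc.2.2.1]
  rcases G.sign_mem c with h | h <;>
    by_cases hRL : G.crossesRL j c <;> by_cases hLR : G.crossesLR j c <;>
      simp [h, hRL, hLR]

lemma cc_contrib_c (hcc : IsCrossingChangeAt G G' c) {k : Fin n} (hk : k ≠ c) :
    G'.contrib c k = - G.contrib c k := by
  unfold contrib
  rw [(cc_RL_c hcc hk).1, (cc_RL_c hcc hk).2, (hcc.2.2.2 k hk).2.2]
  ring

lemma cc_ind_ne (hcc : IsCrossingChangeAt G G' c) {j : Fin n} (hj : j ≠ c) :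
    G'.ind j = G.ind j := by
  rw [ind_eq_sum_s4, ind_eq_sum_s4]
  refine Finset.sum_congr rfl fun k _ => ?_
  by_cases hk : k = c
  · subst hk; exact cc_contrib_jc hcc hj
  · exact cc_contrib_other hcc hj hk

lemma cc_ind_c (hcc : IsCrossingChangeAt G G' c) : G'.ind c = - G.ind c := by
  rw [ind_eq_sum_s4, ind_eq_sum_s4, ← Finset.sum_neg_distrib]
  refine Finset.sum_congr rfl fun k _ => ?_
  by_cases hk : k = c
  · subst hk; rw [contrib_self, contrib_self]; ring
  · exact cc_contrib_c hcc hk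

end CC

lemma sum_sign (G : GaussDiagram n) (s : Finset (Fin n)) :
    ∑ i ∈ s, G.sign i
      = ((s.filter fun i => G.sign i = 1).card : ℤ)
        - ((s.filter fun i => G.sign i = -1).card : ℤ) := by
  classical
  induction s using Finset.induction_on with
  | empty => simp
  | @insert a s ha ih =>
    rw [Finset.sum_insert ha, ih, Finset.filter_insert, Finset.filter_insert]
    rcases G.sign_mem a with h | h
    · rw [if_pos h, if_neg (by rw [h]; norm_num),
        Finset.card_insert_of_notMem (fun hx => ha (Finset.mem_of_mem_filter _ hx))]
      push_cast; rw [h]; ring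
    · rw [if_neg (by rw [h]; norm_num), if_pos h,
        Finset.card_insert_of_notMem (fun hx => ha (Finset.mem_of_mem_filter _ hx))]
      push_cast; rw [h]; ring

lemma J_eq_sum (G : GaussDiagram n) (k : ℤ) :
    G.J k = ∑ i ∈ Finset.univ.filter (fun i => G.ind i = k), G.sign i := by
  rw [sum_sign, Finset.filter_filter, Finset.filter_filter, J]

lemma J_eq_sum' (G : GaussDiagram n) (k : ℤ) :
    G.J k = ∑ i : Fin n, if G.ind i = k then G.sign i else 0 := by
  rw [J_eq_sum, Finset.sum_filter]

lemma cc_J {G G' : GaussDiagram n} {c : Fin n} (hcc : IsCrossingChangeAt G G' c) (k : ℤ) :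
    G'.J k - G'.J (-k) = G.J k - G.J (-k) := by
  have hs : ∀ k' : ℤ, G'.J k'
      = G.J k' - (if G.ind c = k' then G.sign c else 0)
        + (if G'.ind c = k' then G'.sign c else 0) := by
    intro k'
    rw [J_eq_sum' G' k', J_eq_sum' G k',
      ← Finset.sum_erase_add _ _ (Finset.mem_univ c),
      ← Finset.sum_erase_add _ (fun i => if G.ind i = k' then G.sign i else 0)
        (Finset.mem_univ c)]
    have he : ∑ i ∈ Finset.univ.erase c, (if G'.ind i = k' then G'.sign i else 0)
        = ∑ i ∈ Finset.univ.erase c, (if G.ind i = k' then G.sign i else 0) := by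
      refine Finset.sum_congr rfl fun i hi => ?_
      have hic : i ≠ c := Finset.ne_of_mem_erase hi
      rw [cc_ind_ne hcc hic, (hcc.2.2.2 i hic).2.2]
    rw [he]; ring
  rw [hs k, hs (-k), cc_ind_c hcc, hcc.2.2.1]
  by_cases h1 : G.ind c = k <;> by_cases h2 : G.ind c = -k <;>
    simp [h1, h2, neg_eq_iff_eq_neg] <;> split_ifs <;> ring

lemma changedBy_inv : ∀ m (G G' : GaussDiagram n), ChangedBy m G G' →
    ∀ k : ℤ, G.J k - G.J (-k) = G'.J k - G'.J (-k) := by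
  intro m
  induction m with
  | zero =>
    rintro G G' ⟨f, h0, h1, -⟩ k
    rw [← h0, h1]
  | succ m ih =>
    rintro G G' ⟨f, h0, h1, hstep⟩ k
    have h2 : ChangedBy m G (f m) := ⟨f, h0, rfl, fun i hi => hstep i (by omega)⟩
    obtain ⟨c, hcc⟩ := hstep m (by omega)
    rw [ih G (f m) h2 k, ← h1]
    exact (cc_J hcc k).symm

lemma J_eq_zero_of_writhePoly_eq_zero (G : GaussDiagram n) (h0 : G.writhePoly = 0)
    {k : ℤ} (hk : k ≠ 0) : G.J k = 0 := by
  have hco := congrArg (fun p : LaurentPolynomial ℤ => p.coeff k) h0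
  simp only [writhePoly, GaussDiagramAux.lp_sum_apply, ← LaurentPolynomial.single_eq_C_mul_T,
      AddMonoidAlgebra.coeff_single, AddMonoidAlgebra.coeff_zero,
    Finsupp.single_apply, Finsupp.coe_zero, Pi.zero_apply] at hco
  rw [J_eq_sum', ← Finset.sum_filter_add_sum_filter_not Finset.univ (fun i => G.ind i ≠ 0)]
  have h2 : ∑ i ∈ Finset.univ.filter (fun i => ¬ G.ind i ≠ 0),
      (if G.ind i = k then G.sign i else 0) = 0 := by
    refine Finset.sum_eq_zero fun i hi => ?_
    have : G.ind i = 0 := by simpa using (Finset.mem_filter.mp hi).2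
    rw [if_neg (by rw [this]; exact fun h => hk h.symm)]
  rw [h2, add_zero]
  simpa using hco

end GaussDiagram

/-- if `G` can be transformed by a finite sequence of crossing changes into a
Gauss diagram `G'` with `W_{G'}(t) = 0`, then the writhe polynomial of `G` is reciprocal:
`J_k(G) = J_{−k}(G)` for every nonzero integer `k`. -/
theorem writhePoly_reciprocal_of_unknottable_by_crossingChanges {n : ℕ}
    (G G' : GaussDiagram n) (h : ∃ m : ℕ, GaussDiagram.ChangedBy m G G')
    (h0 : G'.writhePoly = 0) :
    ∀ k : ℤ, k ≠ 0 → G.J k = G.J (-k) := by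
  intro k hk
  obtain ⟨m, hm⟩ := h
  have hinv := GaussDiagram.changedBy_inv m G G' hm k
  rw [GaussDiagram.J_eq_zero_of_writhePoly_eq_zero G' h0 hk,
    GaussDiagram.J_eq_zero_of_writhePoly_eq_zero G' h0 (neg_ne_zero.mpr hk)] at hinv
  omega
end

section
/- Let G be a Gauss diagram with c chords in which every two distinct chords are linked. Then every chord of G has index congruent to c − 1 modulo 2; in particular, if c is even then every chord of G has odd index, and if moreover every chord of G has writhe +1, then the odd writhe satisfies J(G) = c. -/
open scoped Classical

/-- in a Gauss diagram with `c` chords in which every two distinct chords are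
linked, every chord has index congruent to `c − 1` modulo `2`; in particular if `c` is even
every chord has odd index, and if moreover all writhes are `+1` then `J(G) = c`. -/
theorem ind_parity_of_pairwise_linked {c : ℕ} (G : GaussDiagram c)
    (hlinked : ∀ i j : Fin c, i ≠ j → G.linked i j) :
    (∀ i : Fin c, G.ind i ≡ (c : ℤ) - 1 [ZMOD 2]) ∧
      (Even c → (∀ i : Fin c, Odd (G.ind i)) ∧
        ((∀ i : Fin c, G.sign i = 1) → G.oddWrithe = (c : ℤ))) := by
  have not_linked_self : ∀ i : Fin c, ¬ G.linked i i := by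
    intro i h
    rcases h with ⟨⟨h1, _⟩, _⟩ | ⟨⟨h1, h2⟩, _⟩
    · -- tail in arc: (tail - tail).val = 0
      simp [sub_self] at h1
    · exact absurd h2 (lt_irrefl _)
  have key : ∀ i : Fin c, G.ind i ≡ (c : ℤ) - 1 [ZMOD 2] := by
    intro i
    have hc : 0 < c := i.pos
    -- split by sign
    have step : ∀ p : Fin c → Prop,
        (Finset.univ.filter fun j => p j ∧ G.sign j = 1).card
          + (Finset.univ.filter fun j => p j ∧ G.sign j = -1).card
          = (Finset.univ.filter p).card := by
      intro p
      have h2 : (Finset.univ.filter fun j => p j ∧ G.sign j = -1)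
          = (Finset.univ.filter fun j => p j ∧ ¬ (G.sign j = 1)) := by
        apply Finset.filter_congr
        intro j _
        rcases G.sign_mem j with h | h <;> simp [h]
      rw [h2, ← Finset.filter_filter, ← Finset.filter_filter]
      exact Finset.card_filter_add_card_filter_not _
    -- RL + LR = c - 1
    have hself : ¬ G.crossesRL i i ∧ ¬ G.crossesLR i i := by
      constructor <;> exact fun h => not_linked_self i h.1
    have hRLset : (Finset.univ.filter (fun j => G.crossesRL i j))
        = (Finset.univ.erase i).filter (fun j => G.crossesRL i j) := by
      ext j
      simp only [Finset.mem_filter, Finset.mem_erase, Finset.mem_univ, true_and, and_true]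
      constructor
      · intro h; refine ⟨fun hji => ?_, h⟩
        subst hji; exact hself.1 h
      · exact fun h => h.2
    have hLRset : (Finset.univ.filter (fun j => G.crossesLR i j))
        = (Finset.univ.erase i).filter (fun j => G.crossesLR i j) := by
      ext j
      simp only [Finset.mem_filter, Finset.mem_erase, Finset.mem_univ, true_and, and_true]
      constructor
      · intro h; refine ⟨fun hji => ?_, h⟩
        subst hji; exact hself.2 h
      · exact fun h => h.2
    have hLRneg : (Finset.univ.erase i).filter (fun j => G.crossesLR i j)
        = (Finset.univ.erase i).filter (fun j => ¬ G.crossesRL i j) := by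
      apply Finset.filter_congr
      intro j hj
      have hji : j ≠ i := (Finset.mem_erase.mp hj).1
      have hl : G.linked i j := hlinked i j (Ne.symm hji)
      rcases hl with ⟨ht, hh⟩ | ⟨hh, ht⟩
      · constructor
        · intro hLR hRL; exact hh hRL.2
        · intro _; exact ⟨Or.inl ⟨ht, hh⟩, ht⟩
      · constructor
        · intro hLR _; exact ht hLR.2
        · intro hnRL; exact absurd ⟨Or.inr ⟨hh, ht⟩, hh⟩ hnRL
    have hcount : (Finset.univ.filter (fun j => G.crossesRL i j)).card
        + (Finset.univ.filter (fun j => G.crossesLR i j)).card = c - 1 := by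
      rw [hRLset, hLRset, hLRneg, Finset.card_filter_add_card_filter_not,
        Finset.card_erase_of_mem (Finset.mem_univ i), Finset.card_univ, Fintype.card_fin]
    have e1 := step (fun j => G.crossesRL i j)
    have e2 := step (fun j => G.crossesLR i j)
    have hsum : (Finset.univ.filter fun j => G.crossesRL i j ∧ G.sign j = 1).card
        + (Finset.univ.filter fun j => G.crossesRL i j ∧ G.sign j = -1).card
        + (Finset.univ.filter fun j => G.crossesLR i j ∧ G.sign j = 1).card
        + (Finset.univ.filter fun j => G.crossesLR i j ∧ G.sign j = -1).card = c - 1 := by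
      omega
    unfold GaussDiagram.ind
    rw [Int.ModEq]
    omega
  refine ⟨key, fun hcEven => ?_⟩
  have hodd : ∀ i : Fin c, Odd (G.ind i) := by
    intro i
    have h := key i
    rw [Int.ModEq] at h
    rw [Int.odd_iff]
    rw [Nat.even_iff] at hcEven
    omega
  refine ⟨hodd, fun hs => ?_⟩
  unfold GaussDiagram.oddWrithe
  rw [Finset.filter_true_of_mem (fun i _ => hodd i)]
  simp [hs]
end

section
/- Let Λ = ℤ[t,t⁻¹] be the ring of Laurent polynomials over ℤ, and let n be a positive integer. The minimal number of generators of the Λ-module M = (Λ/(t² − t + 1))ⁿ, the direct sum of n copies of the quotient of Λ by the ideal generated by t² − t + 1, is exactly n: M is generated by n elements, and no set of fewer than n elements generates M. -/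
open LaurentPolynomial

/-- The virtual knot module of the trefoil: `Λ/(t² − t + 1)` where `Λ = ℤ[t,t⁻¹]`. -/
abbrev TrefoilModule : Type :=
  LaurentPolynomial ℤ ⧸ Ideal.span {(T 2 - T 1 + 1 : LaurentPolynomial ℤ)}

noncomputable section TrefoilAux

def u7 : (ZMod 7)ˣ := ⟨3, 5, by decide, by decide⟩

noncomputable def φ : LaurentPolynomial ℤ →ₐ[ℤ] ZMod 7 :=
  AddMonoidAlgebra.lift ℤ (ZMod 7) ℤ ((Units.coeHom (ZMod 7)).comp (zpowersHom (ZMod 7)ˣ u7))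

lemma φ_T (k : ℤ) : φ (T k) = ((u7 ^ k : (ZMod 7)ˣ) : ZMod 7) := by
  rw [φ, T, AddMonoidAlgebra.lift_single]
  simp [zpowersHom]

lemma φ_p : φ (T 2 - T 1 + 1) = 0 := by
  rw [map_add, map_sub, φ_T, φ_T, map_one]
  decide

lemma φ_vanish : ∀ a ∈ Ideal.span {(T 2 - T 1 + 1 : LaurentPolynomial ℤ)}, φ a = 0 := by
  intro a ha
  rw [Ideal.mem_span_singleton'] at ha
  obtain ⟨c, rfl⟩ := ha
  rw [map_mul, φ_p, mul_zero]

noncomputable def ψ : TrefoilModule →+* ZMod 7 :=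
  Ideal.Quotient.lift _ (φ : LaurentPolynomial ℤ →+* ZMod 7) φ_vanish

lemma ψ_mk (a : LaurentPolynomial ℤ) : ψ (Ideal.Quotient.mk _ a) = φ a := rfl

lemma trefoil_smul_mk (c a : LaurentPolynomial ℤ) :
    c • (Ideal.Quotient.mk _ a : TrefoilModule) = Ideal.Quotient.mk _ (c * a) := rfl

lemma φ_surj : Function.Surjective φ := by
  intro z
  obtain ⟨m, rfl⟩ := ZMod.intCast_surjective z
  exact ⟨(m : LaurentPolynomial ℤ), map_intCast _ m⟩

lemma ψ_surj : Function.Surjective ψ := fun z => by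
  obtain ⟨a, ha⟩ := φ_surj z
  exact ⟨Ideal.Quotient.mk _ a, ha⟩

lemma ψ_smul (c : LaurentPolynomial ℤ) (m : TrefoilModule) :
    ψ (c • m) = φ c * ψ m := by
  obtain ⟨a, rfl⟩ := Ideal.Quotient.mk_surjective m
  rw [trefoil_smul_mk, ψ_mk, ψ_mk, map_mul]

lemma one_ne_zero_trefoil : (1 : TrefoilModule) ≠ 0 := by
  intro h
  have h2 : ψ 1 = ψ 0 := by rw [h]
  rw [map_one, map_zero] at h2
  exact absurd h2 (by decide)


end TrefoilAux


/-- over the Laurent polynomial ring `Λ = ℤ[t,t⁻¹]`, the module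
`M = (Λ/(t² − t + 1))ⁿ` (the virtual knot module of the `n`-fold connected sum of
trefoils, `n > 0`) has minimal number of generators exactly `n`: it is generated by `n`
elements, and no set of fewer than `n` elements generates it. -/
theorem minGenerators_trefoil_module (n : ℕ) (hn : 0 < n) :
    (∃ s : Finset (Fin n → TrefoilModule), s.card = n ∧
      Submodule.span (LaurentPolynomial ℤ) (s : Set (Fin n → TrefoilModule)) = ⊤) ∧
    ∀ s : Finset (Fin n → TrefoilModule),
      Submodule.span (LaurentPolynomial ℤ) (s : Set (Fin n → TrefoilModule)) = ⊤ →
        n ≤ s.card := by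
  classical
  constructor
  · -- upper bound: standard basis
    refine ⟨Finset.univ.image (fun i => Pi.single i (1 : TrefoilModule)), ?_, ?_⟩
    · rw [Finset.card_image_of_injective _ ?_, Finset.card_univ, Fintype.card_fin]
      intro i j hij
      by_contra hne
      have h2 := congrFun hij i
      simp only [Pi.single_eq_same, Pi.single_eq_of_ne hne] at h2
      exact one_ne_zero_trefoil h2
    · rw [eq_top_iff]
      rintro x -
      have hx : x = ∑ i, Pi.single i (x i) := (Finset.univ_sum_single x).symm
      rw [hx]
      refine Submodule.sum_mem _ fun i _ => ?_
      obtain ⟨c, hc⟩ := Ideal.Quotient.mk_surjective (x i)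
      have hone : Pi.single i (x i) = c • (Pi.single i 1 : Fin n → TrefoilModule) := by
        funext j
        by_cases hj : j = i
        · subst hj
          simp only [Pi.smul_apply, Pi.single_eq_same, ← hc]
          have h3 := trefoil_smul_mk c 1
          rw [mul_one] at h3
          exact h3.symm
        · simp [Pi.single_eq_of_ne hj]
      rw [hone]
      exact Submodule.smul_mem _ _ (Submodule.subset_span
        (Finset.mem_coe.mpr (Finset.mem_image_of_mem _ (Finset.mem_univ i))))
  · -- lower bound
    intro s hs
    haveI : Fact (Nat.Prime 7) := ⟨by norm_num⟩
    set F : (Fin n → TrefoilModule) → (Fin n → ZMod 7) := fun y i => ψ (y i) with hF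
    set tt : Finset (Fin n → ZMod 7) := s.image F with htt
    have key : ∀ y : Fin n → TrefoilModule,
        F y ∈ Submodule.span (ZMod 7) (tt : Set (Fin n → ZMod 7)) := by
      intro y
      have hy : y ∈ Submodule.span (LaurentPolynomial ℤ) (s : Set _) := hs ▸ Submodule.mem_top
      refine Submodule.span_induction ?_ ?_ ?_ ?_ hy
      · intro z hz
        exact Submodule.subset_span (Finset.mem_coe.mpr (Finset.mem_image_of_mem F hz))
      · have h0 : F 0 = 0 := by funext i; simp [hF]
        rw [h0]; exact Submodule.zero_mem _
      · intro a b _ _ ha hb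
        have hab : F (a + b) = F a + F b := by funext i; simp [hF]
        rw [hab]; exact Submodule.add_mem _ ha hb
      · intro c v _ hv
        have hcv : F (c • v) = φ c • F v := by
          funext i; simp [hF, ψ_smul, smul_eq_mul]
        rw [hcv]; exact Submodule.smul_mem _ _ hv
    have hspan : Submodule.span (ZMod 7) (tt : Set (Fin n → ZMod 7)) = ⊤ := by
      rw [eq_top_iff]
      rintro x -
      obtain ⟨y, hy⟩ : ∃ y, F y = x :=
        ⟨fun i => (ψ_surj (x i)).choose, funext fun i => (ψ_surj (x i)).choose_spec⟩
      exact hy ▸ key y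
    have h1 : Module.finrank (ZMod 7) (Fin n → ZMod 7) = n := Module.finrank_fin_fun _
    calc n = Module.finrank (ZMod 7) (Fin n → ZMod 7) := h1.symm
      _ = Module.finrank (ZMod 7)
            (Submodule.span (ZMod 7) (tt : Set (Fin n → ZMod 7))) := by
          rw [hspan, finrank_top]
      _ ≤ tt.card := finrank_span_finset_le_card _
      _ ≤ s.card := htt ▸ Finset.card_image_le
end
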